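/- Let N ≥ 1 and let x_0, x_1, …, x_N be pairwise distinct real numbers, and let W be the (N+1)×(N+1) differentiation matrix with entries W_{ij} = ℓ_j'(x_i), where ℓ_j is the j-th Lagrange basis polynomial. Then for every n ≥ 1, the n-th matrix power of W realizes the n-th derivative on polynomials of degree at most N: for every real polynomial p with deg p ≤ N, if v is the vector with v_j = p(x_j), then for every index i, (Wⁿ v)_i = p^{(n)}(x_i). In particular the n-th order differential-quadrature weight matrix w^{(n)}_{ij} = ℓ_j^{(n)}(x_i) acts on such nodal-value vectors identically to Wⁿ. -/
import Mathlib

open Polynomial Finset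

lemma aux_iter {N : ℕ} (x : Fin (N + 1) → ℝ) (hx : Function.Injective x)
    (n : ℕ) (q : ℝ[X]) (hq : q.degree ≤ N) (i : Fin (N + 1)) :
    ∑ j, ((Polynomial.derivative)^[n] (Lagrange.basis Finset.univ x j)).eval (x i)
      * q.eval (x j) = ((Polynomial.derivative)^[n] q).eval (x i) := by
  have hdeg : q.degree < (#(Finset.univ : Finset (Fin (N+1))) : ℕ) := by
    rw [Finset.card_univ, Fintype.card_fin]
    exact lt_of_le_of_lt hq (by exact_mod_cast Nat.lt_succ_self N)
  have hq' : Lagrange.interpolate Finset.univ x (fun j => q.eval (x j)) = q :=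
    (Lagrange.eq_interpolate (Set.injOn_of_injective hx) hdeg).symm
  conv_rhs => rw [← hq', Lagrange.interpolate_apply, Polynomial.iterate_derivative_sum]
  rw [Polynomial.eval_finset_sum]
  refine Finset.sum_congr rfl fun j _ => ?_
  rw [Polynomial.iterate_derivative_C_mul, Polynomial.eval_mul, Polynomial.eval_C, mul_comm]

lemma aux_deg (p : Polynomial ℝ) (m : ℕ) :
    ((Polynomial.derivative)^[m] p).degree ≤ p.degree := by
  induction m with
  | zero => simp
  | succ m ih =>
    rw [Function.iterate_succ_apply']
    exact le_trans Polynomial.degree_derivative_le ih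

/-- With differentiation matrix `W i j = ℓⱼ'(xᵢ)` for pairwise distinct
nodes, for every `n ≥ 1` the matrix power `Wⁿ` realizes the `n`-th derivative on
polynomials of degree at most `N`: if `v j = p(xⱼ)` then `(Wⁿ v)ᵢ = p⁽ⁿ⁾(xᵢ)`;
in particular the `n`-th order weight matrix `w⁽ⁿ⁾ᵢⱼ = ℓⱼ⁽ⁿ⁾(xᵢ)` acts on such
nodal-value vectors identically to `Wⁿ`. -/
theorem dq_matrix_power_realizes_derivative (N : ℕ) (hN : 1 ≤ N)
    (x : Fin (N + 1) → ℝ) (hx : Function.Injective x)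
    (W : Matrix (Fin (N + 1)) (Fin (N + 1)) ℝ)
    (hW : ∀ i j, W i j = (Polynomial.derivative (Lagrange.basis Finset.univ x j)).eval (x i))
    (n : ℕ) (hn : 1 ≤ n)
    (p : ℝ[X]) (hp : p.degree ≤ N) (i : Fin (N + 1)) :
    (W ^ n).mulVec (fun j => p.eval (x j)) i =
      ((Polynomial.derivative)^[n] p).eval (x i) ∧
    (Matrix.of fun i j =>
        ((Polynomial.derivative)^[n] (Lagrange.basis Finset.univ x j)).eval (x i)).mulVec
        (fun j => p.eval (x j)) i =
      (W ^ n).mulVec (fun j => p.eval (x j)) i := by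
  have key : ∀ (m : ℕ) (i : Fin (N+1)),
      (W ^ m).mulVec (fun j => p.eval (x j)) i =
        ((Polynomial.derivative)^[m] p).eval (x i) := by
    intro m
    induction m with
    | zero => intro i; simp [Matrix.mulVec, Matrix.one_apply, dotProduct]
    | succ m ih =>
      intro i
      have hdm : ((Polynomial.derivative)^[m] p).degree ≤ N :=
        le_trans (aux_deg p m) hp
      rw [pow_succ', ← Matrix.mulVec_mulVec]
      have hv : (W ^ m).mulVec (fun j => p.eval (x j)) =
          fun j => ((Polynomial.derivative)^[m] p).eval (x j) := funext ih
      rw [hv, Matrix.mulVec]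
      simp only [dotProduct, hW]
      have := aux_iter x hx 1 ((Polynomial.derivative)^[m] p) hdm i
      simpa [Function.iterate_succ_apply'] using this
  refine ⟨key n i, ?_⟩
  rw [key n i, Matrix.mulVec]
  simpa [dotProduct] using aux_iter x hx n p hp i
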